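/- A qubit j belongs to some su(2) block for ψ if and only if dim_ℝ(P_j(K_ψ)) > 1, where P_j(K_ψ) is the image of K_ψ under the projection P_j, a real subspace of su(2). -/

import Mathlib

open scoped Matrix

noncomputable section

/-- The `n`-qubit Hilbert space `(ℂ²)^{⊗n}`, realized as functions `(Fin n → Fin 2) → ℂ`. -/
abbrev QState (n : ℕ) := (Fin n → Fin 2) → ℂ

/-- The ambient real vector space `ℝ × (Fin n → M₂(ℂ))` containing `u(1) ⊕ su(2)^n`. -/
abbrev GV (n : ℕ) := ℝ × (Fin n → Matrix (Fin 2) (Fin 2) ℂ)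

/-- `su(2)`: traceless skew-Hermitian `2 × 2` complex matrices, as a real subspace. -/
def su2 : Submodule ℝ (Matrix (Fin 2) (Fin 2) ℂ) where
  carrier := {X | Xᴴ = -X ∧ X.trace = 0}
  add_mem' := by
    rintro X Y ⟨hX1, hX2⟩ ⟨hY1, hY2⟩
    exact ⟨by rw [Matrix.conjTranspose_add, hX1, hY1, neg_add],
           by rw [Matrix.trace_add, hX2, hY2, add_zero]⟩
  zero_mem' := ⟨by simp, by simp⟩
  smul_mem' := by
    rintro r X ⟨hX1, hX2⟩
    exact ⟨by rw [Matrix.conjTranspose_smul, hX1, star_trivial, smul_neg],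
           by rw [Matrix.trace_smul, hX2, smul_zero]⟩

/-- The Lie algebra `g = u(1) ⊕ su(2)^n` as a real subspace of `GV n`. -/
def gSub (n : ℕ) : Submodule ℝ (GV n) :=
  (⊤ : Submodule ℝ ℝ).prod (Submodule.pi Set.univ fun _ => su2)

/-- `g_S`: elements `(0, X)` of `g` with `X j = 0` for `j ∉ S`. -/
def gS {n : ℕ} (S : Set (Fin n)) : Submodule ℝ (GV n) :=
  (⊥ : Submodule ℝ ℝ).prod (Submodule.pi Set.univ fun j =>
    letI := Classical.dec (j ∈ S)
    if j ∈ S then su2 else ⊥)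

/-- `ḡ_S`: elements `(t, X)` of `g` with `X j = 0` for `j ∈ S`. -/
def gBar {n : ℕ} (S : Set (Fin n)) : Submodule ℝ (GV n) :=
  (⊤ : Submodule ℝ ℝ).prod (Submodule.pi Set.univ fun j =>
    letI := Classical.dec (j ∈ S)
    if j ∈ S then (⊥ : Submodule ℝ (Matrix (Fin 2) (Fin 2) ℂ)) else su2)

/-- The projection `P_j : g → su(2)`, `(t, X) ↦ X j`. -/
def Pj {n : ℕ} (j : Fin n) : GV n →ₗ[ℝ] Matrix (Fin 2) (Fin 2) ℂ :=
  (LinearMap.proj j).comp (LinearMap.snd ℝ ℝ (Fin n → Matrix (Fin 2) (Fin 2) ℂ))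

/-- Apply the matrix `X` to qubit `j` of the state `ψ`. -/
def applySingle {n : ℕ} (j : Fin n) (X : Matrix (Fin 2) (Fin 2) ℂ) (ψ : QState n) : QState n :=
  fun I => ∑ k : Fin 2, X (I j) k * ψ (Function.update I j k)

/-- The infinitesimal local-unitary action: `dΦ_ψ(t, X) = i t ψ + Σ_j X_j ψ`. -/
def dPhi {n : ℕ} (ψ : QState n) : GV n →ₗ[ℝ] QState n where
  toFun x := fun I => Complex.I * (x.1 : ℂ) * ψ I + ∑ j, applySingle j (x.2 j) ψ I
  map_add' x y := by
    funext I
    simp only [applySingle, Prod.fst_add, Prod.snd_add, Pi.add_apply, Matrix.add_apply,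
      Complex.ofReal_add, add_mul, Finset.sum_add_distrib]
    ring
  map_smul' r x := by
    funext I
    simp only [applySingle, Prod.smul_fst, Prod.smul_snd, Pi.smul_apply, Matrix.smul_apply,
      smul_eq_mul, Complex.real_smul, Complex.ofReal_mul, RingHom.id_apply,
      Finset.mul_sum, mul_add]
    congr 1
    · ring
    · refine Finset.sum_congr rfl fun j _ => Finset.sum_congr rfl fun k _ => by ring

/-- The stabilizer subalgebra `K_ψ = {(t,X) ∈ g : dΦ_ψ(t,X) = 0}`. -/
def stab {n : ℕ} (ψ : QState n) : Submodule ℝ (GV n) :=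
  gSub n ⊓ LinearMap.ker (dPhi ψ)

/-- The componentwise bracket on `g` (zero in the `u(1)` component). -/
def gBracket {n : ℕ} (x y : GV n) : GV n :=
  (0, fun j => ⁅x.2 j, y.2 j⁆)

/-- An `su(2)` block for `ψ`: a set `S` of qubits with `dim (K_ψ ∩ g_S) > 1` and
`dim (K_ψ ∩ g_{S'}) = 0` for every proper subset `S' ⊊ S`. -/
def Su2Block {n : ℕ} (ψ : QState n) (S : Set (Fin n)) : Prop :=
  1 < Module.finrank ℝ ↥(stab ψ ⊓ gS S) ∧
  ∀ S' : Set (Fin n), S' ⊂ S → Module.finrank ℝ ↥(stab ψ ⊓ gS S') = 0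

/-- The union `B` of all `su(2)` blocks for `ψ`. -/
def blockUnion {n : ℕ} (ψ : QState n) : Set (Fin n) :=
  {q | ∃ S : Set (Fin n), Su2Block ψ S ∧ q ∈ S}

/-- The number `p` of `su(2)` blocks for `ψ`. -/
def blockCount {n : ℕ} (ψ : QState n) : ℕ :=
  {S : Set (Fin n) | Su2Block ψ S}.ncard

/-- `ψ` factors across the set `S` of qubits: `ψ(I) = φ(I|_S) · χ(I|_{Sᶜ})`. -/
def FactorsAcross {n : ℕ} (ψ : QState n) (S : Set (Fin n)) : Prop :=
  ∃ (φ : (↥S → Fin 2) → ℂ) (χ : (↥(Sᶜ) → Fin 2) → ℂ),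
    ∀ I : Fin n → Fin 2, ψ I = φ (fun j => I j.1) * χ (fun j => I j.1)

/-- `ψ` is a nonproduct state: it factors across no proper nonempty set of qubits. -/
def IsNonproduct {n : ℕ} (ψ : QState n) : Prop :=
  ∀ S : Set (Fin n), S ≠ ∅ → S ≠ Set.univ → ¬ FactorsAcross ψ S

/-- `ψ` has a single-qubit factor. -/
def HasSingleQubitFactor {n : ℕ} (ψ : QState n) : Prop :=
  ∃ j : Fin n, FactorsAcross ψ {j}

/-- Apply the local unitary (or just local linear) transformation `⊗_j U_j` to `ψ`. -/
def luApply {n : ℕ} (U : Fin n → Matrix (Fin 2) (Fin 2) ℂ) (ψ : QState n) : QState n :=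
  fun I => ∑ J : Fin n → Fin 2, (∏ j, U j (I j) (J j)) * ψ J

/-- Local unitary equivalence of `n`-qubit states. -/
def LUEquiv {n : ℕ} (ψ ψ' : QState n) : Prop :=
  ∃ U : Fin n → Matrix (Fin 2) (Fin 2) ℂ,
    (∀ j, U j ∈ Matrix.unitaryGroup (Fin 2) ℂ) ∧ ψ' = luApply U ψ

/-- The two-qubit singlet state `φ(a,b) = δ_{a0} δ_{b1} − δ_{a1} δ_{b0}`. -/
def singletFn : Fin 2 → Fin 2 → ℂ := fun a b =>
  if a = 0 ∧ b = 1 then 1 else if a = 1 ∧ b = 0 then -1 else 0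

/-- `ψ` has a singlet factor: it is LU-equivalent to a state that factors across a
two-element set of qubits, with the two-qubit factor being the singlet. -/
def HasSingletFactor {n : ℕ} (ψ : QState n) : Prop :=
  ∃ ψ' : QState n, LUEquiv ψ ψ' ∧ ∃ j k : Fin n, j ≠ k ∧
    ∃ χ : (↥(({j, k} : Set (Fin n))ᶜ) → Fin 2) → ℂ,
      ∀ I : Fin n → Fin 2, ψ' I = singletFn (I j) (I k) * χ (fun q => I q.1)

/-- The matrix `A = diag(i, −i) ∈ su(2)`. -/
def matA : Matrix (Fin 2) (Fin 2) ℂ := !![Complex.I, 0; 0, -Complex.I]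

/-- The generalized `n`-qubit GHZ state `α|0…0⟩ + β|1…1⟩`. -/
def ghz (n : ℕ) (α β : ℂ) : QState n := fun I =>
  if ∀ j, I j = 0 then α else if ∀ j, I j = 1 then β else 0

-- su2 toolkit part A
lemma mem_su2 {X : Matrix (Fin 2) (Fin 2) ℂ} : X ∈ su2 ↔ Xᴴ = -X ∧ X.trace = 0 := Iff.rfl

def mk3 (a b c : ℝ) : Matrix (Fin 2) (Fin 2) ℂ :=
  !![Complex.I * a, b + Complex.I * c; -b + Complex.I * c, -(Complex.I * a)]

lemma mk3_mem (a b c : ℝ) : mk3 a b c ∈ su2 := by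
  refine mem_su2.mpr ⟨?_, ?_⟩
  · ext i j
    fin_cases i <;> fin_cases j <;>
      simp [mk3, Matrix.conjTranspose_apply, Complex.ext_iff]
  · simp [Matrix.trace_fin_two, mk3]

lemma su2_repr {X : Matrix (Fin 2) (Fin 2) ℂ} (hX : X ∈ su2) :
    X = mk3 (X 0 0).im (X 0 1).re (X 0 1).im := by
  obtain ⟨h1, h2⟩ := mem_su2.mp hX
  have hc : ∀ a b, (starRingEnd ℂ) (X b a) = -X a b := fun a b => congrFun (congrFun h1 a) b
  have h00 := hc 0 0
  have h01 := hc 0 1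
  have htr : X 0 0 + X 1 1 = 0 := by simpa [Matrix.trace_fin_two] using h2
  have hre00 : (X 0 0).re = 0 := by
    have := congrArg Complex.re h00; simp at this; linarith
  have e00 : X 0 0 = Complex.I * ((X 0 0).im : ℝ) := by
    apply Complex.ext <;> simp [hre00]
  have e01 : X 0 1 = ((X 0 1).re : ℝ) + Complex.I * ((X 0 1).im : ℝ) := by
    apply Complex.ext <;> simp
  have e10 : X 1 0 = -((X 0 1).re : ℝ) + Complex.I * ((X 0 1).im : ℝ) := by
    have hre := congrArg Complex.re h01
    have him := congrArg Complex.im h01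
    simp at hre him
    apply Complex.ext <;> simp <;> linarith
  have e11 : X 1 1 = -(Complex.I * ((X 0 0).im : ℝ)) := by
    rw [← e00]; linear_combination htr
  ext i j
  fin_cases i <;> fin_cases j
  · simpa [mk3] using e00
  · simpa [mk3] using e01
  · simpa [mk3] using e10
  · simpa [mk3] using e11

lemma mk3_eq_zero {a b c : ℝ} (h : mk3 a b c = 0) : a = 0 ∧ b = 0 ∧ c = 0 := by
  have h00 := congrFun (congrFun h 0) 0
  have h01 := congrFun (congrFun h 0) 1
  simp [mk3, Complex.ext_iff] at h00 h01
  exact ⟨h00, h01⟩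

lemma mk3_add (a b c a' b' c' : ℝ) : mk3 a b c + mk3 a' b' c' = mk3 (a+a') (b+b') (c+c') := by
  ext i j
  fin_cases i <;> fin_cases j <;> simp [mk3, Complex.ext_iff] <;> ring

lemma mk3_smul (r a b c : ℝ) : r • mk3 a b c = mk3 (r*a) (r*b) (r*c) := by
  ext i j
  fin_cases i <;> fin_cases j <;>
    simp [mk3, Complex.ext_iff, Complex.real_smul] <;> ring

lemma mk3_bracket (a b c a' b' c' : ℝ) :
    ⁅mk3 a b c, mk3 a' b' c'⁆ =
      mk3 (2*(b*c'-c*b')) (2*(c*a'-a*c')) (2*(a*b'-b*a')) := by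
  show mk3 a b c * mk3 a' b' c' - mk3 a' b' c' * mk3 a b c = _
  ext i j
  fin_cases i <;> fin_cases j <;>
    simp [mk3, Matrix.mul_apply, Fin.sum_univ_two, Complex.ext_iff] <;>
    first | (constructor <;> ring) | trivial | ring

lemma mk3_congr {a b c a' b' c' : ℝ} (h1 : a = a') (h2 : b = b') (h3 : c = c') :
    mk3 a b c = mk3 a' b' c' := by rw [h1, h2, h3]

lemma mk3_zero : mk3 0 0 0 = 0 := by
  ext i j; fin_cases i <;> fin_cases j <;> simp [mk3]

lemma mk3_coord (a b c : ℝ) :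
    (mk3 a b c 0 0).im = a ∧ (mk3 a b c 0 1).re = b ∧ (mk3 a b c 0 1).im = c := by
  refine ⟨?_, ?_, ?_⟩ <;> simp [mk3]

/-- The centralizer of su2 in su2 is trivial. -/
lemma su2_centralizer {X : Matrix (Fin 2) (Fin 2) ℂ} (hX : X ∈ su2)
    (h : ∀ Y ∈ su2, ⁅X, Y⁆ = 0) : X = 0 := by
  obtain ⟨a, b, c, rfl⟩ : ∃ a b c, X = mk3 a b c := ⟨_, _, _, su2_repr hX⟩
  have h1 := h (mk3 1 0 0) (mk3_mem 1 0 0)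
  have h2 := h (mk3 0 1 0) (mk3_mem 0 1 0)
  rw [mk3_bracket] at h1 h2
  obtain ⟨-, e2, e3⟩ := mk3_eq_zero h1
  obtain ⟨-, -, e1⟩ := mk3_eq_zero h2
  rw [← mk3_zero]
  exact mk3_congr (by linarith) (by linarith) (by linarith)

/-- su2 is simple: a nonzero subspace stable under bracketing with su2 contains su2. -/
lemma su2_simple {I' : Submodule ℝ (Matrix (Fin 2) (Fin 2) ℂ)}
    (hstab : ∀ X ∈ su2, ∀ y ∈ I', ⁅X, y⁆ ∈ I')
    {m : Matrix (Fin 2) (Fin 2) ℂ} (hm : m ∈ su2) (hmI : m ∈ I') (hm0 : m ≠ 0) :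
    su2 ≤ I' := by
  obtain ⟨a, b, c, rfl⟩ : ∃ a b c, m = mk3 a b c := ⟨_, _, _, su2_repr hm⟩
  -- basic bracket steps
  have br : ∀ p q r : ℝ, ∀ y, y ∈ I' → ⁅mk3 p q r, y⁆ ∈ I' :=
    fun p q r y hy => hstab _ (mk3_mem p q r) y hy
  -- with e1 twice
  have w1 : mk3 (2*(0*c-0*b)) (2*(0*a-1*c)) (2*(1*b-0*a)) ∈ I' := by
    rw [← mk3_bracket]; exact br 1 0 0 _ hmI
  have w2 : mk3 0 (-4*b) (-4*c) ∈ I' := by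
    have := br 1 0 0 _ w1
    rw [mk3_bracket] at this
    convert this using 2 <;> ring
  have hbc : mk3 0 b c ∈ I' := by
    have := I'.smul_mem (-(1/4) : ℝ) w2
    rw [mk3_smul] at this
    convert this using 2 <;> ring
  have ha00 : mk3 a 0 0 ∈ I' := by
    have := I'.add_mem hmI (I'.smul_mem (-1 : ℝ) hbc)
    rw [mk3_smul, mk3_add] at this
    convert this using 2 <;> ring
  -- with e2 twice
  have v1 : mk3 (2*(1*c-0*b)) (2*(0*a-0*c)) (2*(0*b-1*a)) ∈ I' := by
    rw [← mk3_bracket]; exact br 0 1 0 _ hmI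
  have v2 : mk3 (-4*a) 0 (-4*c) ∈ I' := by
    have := br 0 1 0 _ v1
    rw [mk3_bracket] at this
    convert this using 2 <;> ring
  have hac : mk3 a 0 c ∈ I' := by
    have := I'.smul_mem (-(1/4) : ℝ) v2
    rw [mk3_smul] at this
    convert this using 2 <;> ring
  have hc00 : mk3 0 0 c ∈ I' := by
    have := I'.add_mem hac (I'.smul_mem (-1 : ℝ) ha00)
    rw [mk3_smul, mk3_add] at this
    convert this using 2 <;> ring
  have hb00 : mk3 0 b 0 ∈ I' := by
    have := I'.add_mem hbc (I'.smul_mem (-1 : ℝ) hc00)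
    rw [mk3_smul, mk3_add] at this
    convert this using 2 <;> ring
  -- now get the three basis elements, by cases on which coordinate is nonzero
  have key : mk3 1 0 0 ∈ I' ∧ mk3 0 1 0 ∈ I' ∧ mk3 0 0 1 ∈ I' := by
    have habc : ¬(a = 0 ∧ b = 0 ∧ c = 0) := by
      rintro ⟨rfl, rfl, rfl⟩; exact hm0 mk3_zero
    -- helper : from e1 get others, etc.
    have of1 : mk3 1 0 0 ∈ I' → mk3 1 0 0 ∈ I' ∧ mk3 0 1 0 ∈ I' ∧ mk3 0 0 1 ∈ I' := by
      intro h1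
      have h3 : mk3 0 0 1 ∈ I' := by
        have := I'.smul_mem (-(1/2) : ℝ) (br 0 1 0 _ h1)
        rw [mk3_bracket, mk3_smul] at this
        convert this using 2 <;> ring
      have h2 : mk3 0 1 0 ∈ I' := by
        have := I'.smul_mem ((1/2) : ℝ) (br 0 0 1 _ h1)
        rw [mk3_bracket, mk3_smul] at this
        convert this using 2 <;> ring
      exact ⟨h1, h2, h3⟩
    have of2 : mk3 0 1 0 ∈ I' → mk3 1 0 0 ∈ I' := by
      intro h2
      have := I'.smul_mem (-(1/2) : ℝ) (br 0 0 1 _ h2)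
      rw [mk3_bracket, mk3_smul] at this
      convert this using 2 <;> ring
    have of3 : mk3 0 0 1 ∈ I' → mk3 1 0 0 ∈ I' := by
      intro h3
      have := I'.smul_mem ((1/2) : ℝ) (br 0 1 0 _ h3)
      rw [mk3_bracket, mk3_smul] at this
      convert this using 2 <;> ring
    rcases eq_or_ne a 0 with rfl | hA
    · rcases eq_or_ne b 0 with rfl | hB
      · rcases eq_or_ne c 0 with rfl | hC
        · exact absurd ⟨rfl, rfl, rfl⟩ habc
        · apply of1; apply of3
          have := I'.smul_mem ((1/c) : ℝ) hc00
          rw [mk3_smul] at this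
          convert this using 2 <;> field_simp <;> ring
      · apply of1; apply of2
        have := I'.smul_mem ((1/b) : ℝ) hb00
        rw [mk3_smul] at this
        convert this using 2 <;> field_simp <;> ring
    · apply of1
      have := I'.smul_mem ((1/a) : ℝ) ha00
      rw [mk3_smul] at this
      convert this using 2 <;> field_simp <;> ring
  obtain ⟨k1, k2, k3⟩ := key
  intro X hX
  obtain ⟨p, q, r, rfl⟩ : ∃ p q r, X = mk3 p q r := ⟨_, _, _, su2_repr hX⟩
  have : mk3 p q r = p • mk3 1 0 0 + q • mk3 0 1 0 + r • mk3 0 0 1 := by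
    rw [mk3_smul, mk3_smul, mk3_smul, mk3_add, mk3_add]
    exact mk3_congr (by ring) (by ring) (by ring)
  rw [this]
  exact I'.add_mem (I'.add_mem (I'.smul_mem p k1) (I'.smul_mem q k2)) (I'.smul_mem r k3)

/-- Linear equivalence between su2 and ℝ³. -/
def su2Equiv : su2 ≃ₗ[ℝ] (Fin 3 → ℝ) where
  toFun X := ![((X : Matrix (Fin 2) (Fin 2) ℂ) 0 0).im,
               ((X : Matrix (Fin 2) (Fin 2) ℂ) 0 1).re,
               ((X : Matrix (Fin 2) (Fin 2) ℂ) 0 1).im]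
  map_add' X Y := by
    funext i
    fin_cases i <;> simp [Matrix.add_apply]
  map_smul' r X := by
    funext i
    fin_cases i <;>
      simp [Matrix.smul_apply, Complex.real_smul, Complex.ofReal_mul]
  invFun g := ⟨mk3 (g 0) (g 1) (g 2), mk3_mem _ _ _⟩
  left_inv X := by
    apply Subtype.ext
    exact (su2_repr X.2).symm
  right_inv g := by
    funext i
    fin_cases i <;> simp [mk3]

lemma finrank_su2 : Module.finrank ℝ su2 = 3 := by
  rw [su2Equiv.finrank_eq]
  simp [Module.finrank_pi]


lemma sq3_zero {x y z : ℝ} (h : 0 = x^2 + y^2 + z^2) : x = 0 ∧ y = 0 ∧ z = 0 :=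
  ⟨by nlinarith, by nlinarith, by nlinarith⟩

set_option maxHeartbeats 1000000 in
/-- A subalgebra of su2 of dimension at least 2 is all of su2. -/
lemma su2_span {W : Submodule ℝ (Matrix (Fin 2) (Fin 2) ℂ)} (hle : W ≤ su2)
    (hbr : ∀ x ∈ W, ∀ y ∈ W, ⁅x, y⁆ ∈ W) (h2 : 2 ≤ Module.finrank ℝ W) : W = su2 := by
  obtain ⟨f, hf⟩ := exists_linearIndependent_of_le_finrank h2 (R := ℝ) (M := W)
  have hfi : LinearIndependent ℝ (fun i => ((f i : W) : Matrix (Fin 2) (Fin 2) ℂ)) :=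
    hf.map' W.subtype W.ker_subtype
  set u : Matrix (Fin 2) (Fin 2) ℂ := ↑(f 0) with hu_def
  set v : Matrix (Fin 2) (Fin 2) ℂ := ↑(f 1) with hv_def
  have huW : u ∈ W := (f 0).2
  have hvW : v ∈ W := (f 1).2
  have Ind : ∀ α β : ℝ, α • u + β • v = 0 → α = 0 ∧ β = 0 := by
    intro α β h
    have := Fintype.linearIndependent_iff.mp hfi ![α, β]
      (by simpa [Fin.sum_univ_two] using h)
    exact ⟨this 0, this 1⟩
  obtain ⟨a1, b1, c1, hu⟩ : ∃ a b c, u = mk3 a b c := ⟨_, _, _, su2_repr (hle huW)⟩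
  obtain ⟨a2, b2, c2, hv⟩ : ∃ a b c, v = mk3 a b c := ⟨_, _, _, su2_repr (hle hvW)⟩
  have IndC : ∀ α β : ℝ, α*a1+β*a2 = 0 → α*b1+β*b2 = 0 → α*c1+β*c2 = 0 →
      α = 0 ∧ β = 0 := by
    intro α β h1 h2' h3
    apply Ind
    rw [hu, hv, mk3_smul, mk3_smul, mk3_add, ← mk3_zero]
    exact mk3_congr h1 h2' h3
  have hn1 : 0 < a1^2 + b1^2 + c1^2 := by
    rcases lt_or_eq_of_le (by positivity : (0:ℝ) ≤ a1^2+b1^2+c1^2) with h | h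
    · exact h
    · exfalso
      obtain ⟨ha, hb, hc⟩ := sq3_zero h
      have := IndC 1 0 (by rw [ha]; ring) (by rw [hb]; ring) (by rw [hc]; ring)
      exact one_ne_zero this.1
  -- w = [u,v]
  have hwW : ⁅u, v⁆ ∈ W := hbr u huW v hvW
  have hw : ⁅u, v⁆ = mk3 (2*(b1*c2-c1*b2)) (2*(c1*a2-a1*c2)) (2*(a1*b2-b1*a2)) := by
    rw [hu, hv, mk3_bracket]
  set wa : ℝ := 2*(b1*c2-c1*b2) with hwa
  set wb : ℝ := 2*(c1*a2-a1*c2) with hwb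
  set wc : ℝ := 2*(a1*b2-b1*a2) with hwc
  have hnw : 0 < wa^2 + wb^2 + wc^2 := by
    rcases lt_or_eq_of_le (by positivity : (0:ℝ) ≤ wa^2+wb^2+wc^2) with h | h
    · exact h
    · exfalso
      obtain ⟨ha, hb, hc⟩ := sq3_zero h
      rw [hwa] at ha; rw [hwb] at hb; rw [hwc] at hc
      -- grassmann: (u·v) u = (u·u) v
      have e1 : (a1*a2+b1*b2+c1*c2)*a1 - (a1^2+b1^2+c1^2)*a2 = 0 := by
        linear_combination (b1/2) * hc - (c1/2) * hb
      have e2 : (a1*a2+b1*b2+c1*c2)*b1 - (a1^2+b1^2+c1^2)*b2 = 0 := by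
        linear_combination (c1/2) * ha - (a1/2) * hc
      have e3 : (a1*a2+b1*b2+c1*c2)*c1 - (a1^2+b1^2+c1^2)*c2 = 0 := by
        linear_combination (a1/2) * hb - (b1/2) * ha
      have := IndC (a1*a2+b1*b2+c1*c2) (-(a1^2+b1^2+c1^2))
        (by linarith [e1]) (by linarith [e2]) (by linarith [e3])
      exact absurd this.2 (by intro h'; nlinarith)
  -- w2 = [w,u]
  have hw2W : ⁅⁅u,v⁆, u⁆ ∈ W := hbr _ hwW u huW
  have hw2 : ⁅⁅u,v⁆, u⁆ = mk3 (2*(wb*c1-wc*b1)) (2*(wc*a1-wa*c1)) (2*(wa*b1-wb*a1)) := by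
    rw [hw, hu, mk3_bracket]
  set w2a : ℝ := 2*(wb*c1-wc*b1) with hw2a
  set w2b : ℝ := 2*(wc*a1-wa*c1) with hw2b
  set w2c : ℝ := 2*(wa*b1-wb*a1) with hw2c
  -- orthogonality relations
  have o_uw : a1*wa + b1*wb + c1*wc = 0 := by rw [hwa, hwb, hwc]; ring
  have o_uw2 : a1*w2a + b1*w2b + c1*w2c = 0 := by rw [hw2a, hw2b, hw2c]; ring
  have o_ww2 : wa*w2a + wb*w2b + wc*w2c = 0 := by rw [hw2a, hw2b, hw2c]; ring
  have hnw2 : 0 < w2a^2 + w2b^2 + w2c^2 := by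
    rcases lt_or_eq_of_le (by positivity : (0:ℝ) ≤ w2a^2+w2b^2+w2c^2) with h | h
    · exact h
    · exfalso
      obtain ⟨ha, hb, hc⟩ := sq3_zero h
      rw [hw2a] at ha; rw [hw2b] at hb; rw [hw2c] at hc
      have e1 : (wa*a1+wb*b1+wc*c1)*wa - (wa^2+wb^2+wc^2)*a1 = 0 := by
        linear_combination (wb/2) * hc - (wc/2) * hb
      have e2 : (wa*a1+wb*b1+wc*c1)*wb - (wa^2+wb^2+wc^2)*b1 = 0 := by
        linear_combination (wc/2) * ha - (wa/2) * hc
      have e3 : (wa*a1+wb*b1+wc*c1)*wc - (wa^2+wb^2+wc^2)*c1 = 0 := by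
        linear_combination (wa/2) * hb - (wb/2) * ha
      have hwu : wa*a1+wb*b1+wc*c1 = 0 := by linear_combination o_uw
      rw [hwu] at e1 e2 e3
      have ha1 : a1 = 0 := by
        have : (wa^2+wb^2+wc^2)*a1 = 0 := by linarith
        exact (mul_eq_zero.mp this).resolve_left (ne_of_gt hnw)
      have hb1 : b1 = 0 := by
        have : (wa^2+wb^2+wc^2)*b1 = 0 := by linarith
        exact (mul_eq_zero.mp this).resolve_left (ne_of_gt hnw)
      have hc1 : c1 = 0 := by
        have : (wa^2+wb^2+wc^2)*c1 = 0 := by linarith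
        exact (mul_eq_zero.mp this).resolve_left (ne_of_gt hnw)
      nlinarith
  -- the three elements u, w, w2 are linearly independent in W
  have hFi : LinearIndependent ℝ
      (![⟨u, huW⟩, ⟨⁅u,v⁆, hwW⟩, ⟨⁅⁅u,v⁆,u⁆, hw2W⟩] : Fin 3 → W) := by
    rw [Fintype.linearIndependent_iff]
    intro g hg
    have hg' : g 0 • u + g 1 • ⁅u,v⁆ + g 2 • ⁅⁅u,v⁆,u⁆ = 0 := by
      have := congrArg (Subtype.val) hg
      simpa [Fin.sum_univ_three] using this
    rw [hw2, hw, hu, mk3_smul, mk3_smul, mk3_smul, mk3_add, mk3_add, ← mk3_zero] at hg'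
    obtain ⟨E1, E2, E3⟩ := mk3_eq_zero (by rw [hg', mk3_zero])
    have hg0 : g 0 * (a1^2+b1^2+c1^2) = 0 := by
      linear_combination a1*E1 + b1*E2 + c1*E3 + g 1 * o_uw + g 2 * o_uw2
    have hg1 : g 1 * (wa^2+wb^2+wc^2) = 0 := by
      linear_combination wa*E1 + wb*E2 + wc*E3 + g 0 * o_uw + g 2 * o_ww2
    have hg2 : g 2 * (w2a^2+w2b^2+w2c^2) = 0 := by
      linear_combination w2a*E1 + w2b*E2 + w2c*E3 + g 0 * o_uw2 + g 1 * o_ww2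
    intro i
    fin_cases i
    · exact (mul_eq_zero.mp hg0).resolve_right (ne_of_gt hn1)
    · exact (mul_eq_zero.mp hg1).resolve_right (ne_of_gt hnw)
    · exact (mul_eq_zero.mp hg2).resolve_right (ne_of_gt hnw2)
  have h3 : 3 ≤ Module.finrank ℝ W := by
    simpa using hFi.fintype_card_le_finrank
  exact Submodule.eq_of_le_of_finrank_le hle (by rw [finrank_su2]; omega)

lemma Pj_apply {n : ℕ} (j : Fin n) (x : GV n) : Pj j x = x.2 j := rfl

lemma dPhi_apply {n : ℕ} (ψ : QState n) (x : GV n) (I : Fin n → Fin 2) :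
    dPhi ψ x I = Complex.I * (x.1 : ℂ) * ψ I + ∑ j, applySingle j (x.2 j) ψ I := rfl

lemma mem_gSub {n : ℕ} {x : GV n} : x ∈ gSub n ↔ ∀ k, x.2 k ∈ su2 := by
  constructor
  · rintro ⟨-, h2⟩
    exact fun k => h2 k (Set.mem_univ k)
  · intro h
    exact ⟨trivial, fun k _ => h k⟩

lemma mem_gS {n : ℕ} {S : Set (Fin n)} {x : GV n} :
    x ∈ gS S ↔ x.1 = 0 ∧ (∀ k, k ∈ S → x.2 k ∈ su2) ∧ (∀ k, k ∉ S → x.2 k = 0) := by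
  rw [gS, Submodule.mem_prod, Submodule.mem_pi, Submodule.mem_bot]
  constructor
  · rintro ⟨h1, h2⟩
    refine ⟨h1, fun k hk => ?_, fun k hk => ?_⟩
    · have := h2 k trivial
      rwa [if_pos hk] at this
    · have := h2 k trivial
      rw [if_neg hk] at this
      simpa using this
  · rintro ⟨h1, h2, h3⟩
    refine ⟨h1, fun k _ => ?_⟩
    by_cases hk : k ∈ S
    · rw [if_pos hk]; exact h2 k hk
    · rw [if_neg hk]; simp only [Submodule.mem_bot]; exact h3 k hk

lemma bracket_mem_su2 {A B : Matrix (Fin 2) (Fin 2) ℂ} (hA : A ∈ su2) (hB : B ∈ su2) :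
    ⁅A, B⁆ ∈ su2 := by
  obtain ⟨hA1, hA2⟩ := mem_su2.mp hA
  obtain ⟨hB1, hB2⟩ := mem_su2.mp hB
  refine mem_su2.mpr ⟨?_, ?_⟩
  · rw [Ring.lie_def, Matrix.conjTranspose_sub, Matrix.conjTranspose_mul,
      Matrix.conjTranspose_mul, hA1, hB1]
    simp [mul_comm]
  · rw [Ring.lie_def, Matrix.trace_sub, Matrix.trace_mul_comm, sub_self]

lemma gBracket_mem_gSub {n : ℕ} {x y : GV n} (hx : x ∈ gSub n) (hy : y ∈ gSub n) :
    gBracket x y ∈ gSub n := by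
  rw [mem_gSub] at hx hy ⊢
  exact fun k => bracket_mem_su2 (hx k) (hy k)

-- applySingle algebra
lemma applySingle_zero_state {n : ℕ} (j : Fin n) (A : Matrix (Fin 2) (Fin 2) ℂ) :
    applySingle j A (0 : QState n) = 0 := by
  funext I; simp [applySingle]

lemma applySingle_comp_same {n : ℕ} (j : Fin n) (A B : Matrix (Fin 2) (Fin 2) ℂ)
    (ψ : QState n) :
    applySingle j A (applySingle j B ψ) = applySingle j (A * B) ψ := by
  funext I
  simp only [applySingle, Function.update_self, Function.update_idem, Matrix.mul_apply,
    Finset.mul_sum, Finset.sum_mul]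
  rw [Finset.sum_comm]
  exact Finset.sum_congr rfl fun m _ => Finset.sum_congr rfl fun k _ => by ring

lemma applySingle_comm {n : ℕ} {j k : Fin n} (h : j ≠ k) (A B : Matrix (Fin 2) (Fin 2) ℂ)
    (ψ : QState n) :
    applySingle j A (applySingle k B ψ) = applySingle k B (applySingle j A ψ) := by
  funext I
  simp only [applySingle, Finset.mul_sum]
  rw [Finset.sum_comm]
  refine Finset.sum_congr rfl fun p _ => Finset.sum_congr rfl fun m _ => ?_
  rw [Function.update_of_ne h.symm, Function.update_of_ne h,
    Function.update_comm h]
  ring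

lemma applySingle_sub_matrix {n : ℕ} (j : Fin n) (A B : Matrix (Fin 2) (Fin 2) ℂ)
    (ψ : QState n) :
    applySingle j (A - B) ψ = applySingle j A ψ - applySingle j B ψ := by
  funext I
  simp [applySingle, Matrix.sub_apply, sub_mul, Finset.sum_sub_distrib]

-- applying a single-qubit operator to dPhi ψ y
lemma applySingle_dPhi {n : ℕ} (j : Fin n) (A : Matrix (Fin 2) (Fin 2) ℂ)
    (ψ : QState n) (y : GV n) (I : Fin n → Fin 2) :
    applySingle j A (dPhi ψ y) I =
      Complex.I * (y.1 : ℂ) * applySingle j A ψ I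
        + ∑ k, applySingle j A (applySingle k (y.2 k) ψ) I := by
  simp only [applySingle, dPhi_apply, mul_add]
  rw [Finset.sum_add_distrib]
  congr 1
  · rw [Finset.mul_sum]
    exact Finset.sum_congr rfl fun m _ => by ring
  · rw [Finset.sum_comm]
    simp only [Finset.mul_sum]

lemma dPhi_zero_state {n : ℕ} (x : GV n) : dPhi (0 : QState n) x = 0 := by
  funext I
  simp [dPhi_apply, applySingle]

lemma dPhi_op_comm {n : ℕ} (ψ : QState n) (x y : GV n) :
    dPhi ψ (gBracket x y) = dPhi (dPhi ψ y) x - dPhi (dPhi ψ x) y := by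
  have hL : ∀ z w : GV n, ∀ I, dPhi (dPhi ψ w) z I =
      Complex.I * z.1 * (Complex.I * w.1 * ψ I)
      + Complex.I * z.1 * (∑ k, applySingle k (w.2 k) ψ I)
      + Complex.I * w.1 * (∑ jj, applySingle jj (z.2 jj) ψ I)
      + ∑ jj, ∑ k, applySingle jj (z.2 jj) (applySingle k (w.2 k) ψ) I := by
    intro z w I
    rw [show dPhi (dPhi ψ w) z I
        = Complex.I * z.1 * (dPhi ψ w I) + ∑ jj, applySingle jj (z.2 jj) (dPhi ψ w) I from rfl]
    rw [dPhi_apply ψ w]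
    simp only [applySingle_dPhi, Finset.sum_add_distrib, ← Finset.mul_sum]
    ring
  funext I
  rw [Pi.sub_apply, hL x y I, hL y x I, dPhi_apply]
  have hg1 : (((gBracket x y).1 : ℝ) : ℂ) = 0 := by norm_num [gBracket]
  rw [hg1]
  have hdiag : ∀ j : Fin n, applySingle j ((gBracket x y).2 j) ψ I
      = ∑ k, (applySingle j (x.2 j) (applySingle k (y.2 k) ψ) I
              - applySingle k (y.2 k) (applySingle j (x.2 j) ψ) I) := by
    intro j
    rw [Finset.sum_eq_single j]
    · rw [show (gBracket x y).2 j = ⁅x.2 j, y.2 j⁆ from rfl, Ring.lie_def,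
        applySingle_sub_matrix, ← applySingle_comp_same, ← applySingle_comp_same]
      rfl
    · intro k _ hkj
      rw [applySingle_comm (Ne.symm hkj)]
      exact sub_self _
    · intro h
      exact absurd (Finset.mem_univ j) h
  rw [Finset.sum_congr rfl (fun j _ => hdiag j)]
  simp only [Finset.sum_sub_distrib]
  have hswap : (∑ j : Fin n, ∑ k : Fin n, applySingle k (y.2 k) (applySingle j (x.2 j) ψ) I)
      = ∑ k : Fin n, ∑ j : Fin n, applySingle k (y.2 k) (applySingle j (x.2 j) ψ) I :=
    Finset.sum_comm
  rw [hswap]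
  ring

lemma stab_bracket {n : ℕ} {ψ : QState n} {x y : GV n}
    (hx : x ∈ stab ψ) (hy : y ∈ stab ψ) : gBracket x y ∈ stab ψ := by
  rw [stab, Submodule.mem_inf] at hx hy ⊢
  obtain ⟨hx1, hx2⟩ := hx
  obtain ⟨hy1, hy2⟩ := hy
  rw [LinearMap.mem_ker] at hx2 hy2
  refine ⟨gBracket_mem_gSub hx1 hy1, LinearMap.mem_ker.mpr ?_⟩
  rw [dPhi_op_comm, hx2, hy2, dPhi_zero_state, dPhi_zero_state, sub_zero]

/-- The invariant inner product on `GV n`. -/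
def bilGV (n : ℕ) : GV n →ₗ[ℝ] GV n →ₗ[ℝ] ℝ :=
  LinearMap.mk₂ ℝ
    (fun x y => x.1 * y.1 +
      ∑ k, ∑ a, ∑ b, (x.2 k a b * (starRingEnd ℂ) (y.2 k a b)).re)
    (fun x x' y => by
      simp only [Prod.fst_add, Prod.snd_add, Pi.add_apply, Matrix.add_apply, add_mul,
        Complex.add_re, Finset.sum_add_distrib]
      ring)
    (fun r x y => by
      simp only [Prod.smul_fst, Prod.smul_snd, Pi.smul_apply, Matrix.smul_apply,
        Complex.real_smul, smul_eq_mul, mul_assoc, Complex.re_ofReal_mul, mul_add,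
        Finset.mul_sum])
    (fun x y y' => by
      simp only [Prod.fst_add, Prod.snd_add, Pi.add_apply, Matrix.add_apply, map_add,
        mul_add, Complex.add_re, Finset.sum_add_distrib]
      ring)
    (fun r x y => by
      simp only [Prod.smul_fst, Prod.smul_snd, Pi.smul_apply, Matrix.smul_apply,
        Complex.real_smul, smul_eq_mul, map_mul, Complex.conj_ofReal, mul_add,
        Finset.mul_sum, mul_left_comm, Complex.re_ofReal_mul])

lemma bilGV_apply {n : ℕ} (x y : GV n) :
    bilGV n x y = x.1 * y.1 +
      ∑ k, ∑ a, ∑ b, (x.2 k a b * (starRingEnd ℂ) (y.2 k a b)).re := rfl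

lemma bilGV_symm {n : ℕ} (x y : GV n) : bilGV n x y = bilGV n y x := by
  rw [bilGV_apply, bilGV_apply]
  congr 1
  · ring
  · refine Finset.sum_congr rfl fun k _ => Finset.sum_congr rfl fun a _ =>
      Finset.sum_congr rfl fun b _ => ?_
    simp [Complex.mul_re]
    ring

lemma bilGV_self_eq_zero {n : ℕ} {x : GV n} (h : bilGV n x x = 0) : x = 0 := by
  rw [bilGV_apply] at h
  have hterm : ∀ k a b, 0 ≤ (x.2 k a b * (starRingEnd ℂ) (x.2 k a b)).re := by
    intro k a b
    rw [Complex.mul_conj]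
    simp [Complex.normSq_nonneg]
  have hS : 0 ≤ ∑ k, ∑ a, ∑ b, (x.2 k a b * (starRingEnd ℂ) (x.2 k a b)).re :=
    Finset.sum_nonneg fun k _ => Finset.sum_nonneg fun a _ =>
      Finset.sum_nonneg fun b _ => hterm k a b
  have h1 : x.1 = 0 := by nlinarith [mul_self_nonneg x.1]
  have hS0 : ∑ k, ∑ a, ∑ b, (x.2 k a b * (starRingEnd ℂ) (x.2 k a b)).re = 0 := by
    nlinarith [mul_self_nonneg x.1]
  have hentry : ∀ k a b, x.2 k a b = 0 := by
    intro k a b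
    have hk := (Finset.sum_eq_zero_iff_of_nonneg fun k _ => Finset.sum_nonneg fun a _ =>
      Finset.sum_nonneg fun b _ => hterm k a b).mp hS0 k (Finset.mem_univ k)
    have ha := (Finset.sum_eq_zero_iff_of_nonneg fun a _ =>
      Finset.sum_nonneg fun b _ => hterm k a b).mp hk a (Finset.mem_univ a)
    have hb := (Finset.sum_eq_zero_iff_of_nonneg fun b _ => hterm k a b).mp ha b
      (Finset.mem_univ b)
    rw [Complex.mul_conj] at hb
    have : Complex.normSq (x.2 k a b) = 0 := by simpa using hb
    exact Complex.normSq_eq_zero.mp this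
  have hx2 : x.2 = 0 := by
    funext k; ext a b
    simpa using hentry k a b
  exact Prod.ext h1 hx2

lemma entry_trace (M N : Matrix (Fin 2) (Fin 2) ℂ) :
    ∑ a, ∑ b, (M a b * (starRingEnd ℂ) (N a b)).re = ((M * Nᴴ).trace).re := by
  rw [Matrix.trace]
  rw [Complex.re_sum]
  refine Finset.sum_congr rfl fun a _ => ?_
  rw [Matrix.diag_apply, Matrix.mul_apply, Complex.re_sum]
  refine Finset.sum_congr rfl fun b _ => ?_
  rw [Matrix.conjTranspose_apply]
  rfl

lemma trace_inv_key (X A B : Matrix (Fin 2) (Fin 2) ℂ) (hX : Xᴴ = -X) (hB : Bᴴ = -B) :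
    ((⁅X, A⁆ * Bᴴ).trace) = -((A * (⁅X, B⁆)ᴴ).trace) := by
  rw [Ring.lie_def, Ring.lie_def, Matrix.conjTranspose_sub, Matrix.conjTranspose_mul,
    Matrix.conjTranspose_mul, hX, hB]
  simp only [Matrix.mul_neg, Matrix.neg_mul, neg_neg, Matrix.sub_mul, Matrix.mul_sub,
    Matrix.trace_sub, Matrix.trace_neg, Matrix.mul_assoc, neg_sub, sub_neg_eq_add]
  rw [show (A * (B * X)).trace = (X * (A * B)).trace from by
    rw [← Matrix.mul_assoc, ← Matrix.mul_assoc, Matrix.trace_mul_cycle]]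

lemma bilGV_inv {n : ℕ} (x a b : GV n)
    (hx : ∀ k, (x.2 k)ᴴ = -(x.2 k)) (hb : ∀ k, (b.2 k)ᴴ = -(b.2 k)) :
    bilGV n (gBracket x a) b = - bilGV n a (gBracket x b) := by
  rw [bilGV_apply, bilGV_apply]
  have h1 : (gBracket x a).1 = 0 := rfl
  have h2 : (gBracket x b).1 = 0 := rfl
  rw [h1, h2]
  have hterm : ∀ k, ∑ p, ∑ q, ((gBracket x a).2 k p q * (starRingEnd ℂ) (b.2 k p q)).re
      = - ∑ p, ∑ q, (a.2 k p q * (starRingEnd ℂ) ((gBracket x b).2 k p q)).re := by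
    intro k
    rw [entry_trace, entry_trace]
    rw [show (gBracket x a).2 k = ⁅x.2 k, a.2 k⁆ from rfl,
        show (gBracket x b).2 k = ⁅x.2 k, b.2 k⁆ from rfl]
    rw [trace_inv_key (x.2 k) (a.2 k) (b.2 k) (hx k) (hb k)]
    simp
  rw [Finset.sum_congr rfl fun k _ => hterm k, Finset.sum_neg_distrib]
  ring

lemma finrank_ker_domRestrict {R M M' : Type*} [Field R] [AddCommGroup M] [Module R M]
    [AddCommGroup M'] [Module R M'] [FiniteDimensional R M] (K : Submodule R M)
    (f : M →ₗ[R] M') :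
    Module.finrank R (LinearMap.ker (f.domRestrict K))
      = Module.finrank R ↥(K ⊓ LinearMap.ker f) := by
  rw [LinearMap.ker_domRestrict]
  have e' := K.equivSubtypeMap (Submodule.comap K.subtype (LinearMap.ker f))
  have e := LinearEquiv.finrank_eq (R := R) e'
  rw [Submodule.map_comap_subtype] at e
  exact e

lemma finrank_map_of_inj {n : ℕ} {L : Submodule ℝ (GV n)}
    {f : GV n →ₗ[ℝ] Matrix (Fin 2) (Fin 2) ℂ}
    (h : ∀ l ∈ L, f l = 0 → l = 0) :
    Module.finrank ℝ ↥(L.map f) = Module.finrank ℝ ↥L := by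
  rw [← LinearMap.range_domRestrict]
  apply LinearMap.finrank_range_of_inj
  rw [← LinearMap.ker_eq_bot, LinearMap.ker_eq_bot']
  intro m hm
  exact Subtype.ext (h m.1 m.2 (by simpa using hm))

example (n : ℕ) : FiniteDimensional ℝ (GV n) := inferInstance

set_option maxHeartbeats 1600000
set_option synthInstance.maxHeartbeats 400000

theorem stmt3' {n : ℕ} (hn : 1 ≤ n) (ψ : QState n) (hψ : ψ ≠ 0) (j : Fin n) :
    (∃ S : Set (Fin n), Su2Block ψ S ∧ j ∈ S) ↔
      1 < Module.finrank ℝ ↥((stab ψ).map (Pj j)) := by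
  constructor
  · rintro ⟨S, ⟨hdim, hmin⟩, hjS⟩
    have hzero : stab ψ ⊓ gS (S \ {j}) = ⊥ :=
      Submodule.finrank_eq_zero.mp (hmin _ (Set.sdiff_singleton_ssubset.mpr hjS))
    have hinj : ∀ z ∈ stab ψ ⊓ gS S, Pj j z = 0 → z = 0 := by
      intro z hz h0
      obtain ⟨hz1, hz2⟩ := Submodule.mem_inf.mp hz
      rw [mem_gS] at hz2
      have : z ∈ stab ψ ⊓ gS (S \ {j}) := by
        refine Submodule.mem_inf.mpr ⟨hz1, mem_gS.mpr ⟨hz2.1, ?_, ?_⟩⟩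
        · exact fun k hk => hz2.2.1 k hk.1
        · intro k hk
          by_cases hkS : k ∈ S
          · have hkj : k = j := by
              by_contra hne
              exact hk ⟨hkS, hne⟩
            rw [hkj]; exact h0
          · exact hz2.2.2 k hkS
      rw [hzero] at this
      simpa using this
    have h1 : Module.finrank ℝ ↥((stab ψ ⊓ gS S).map (Pj j))
        = Module.finrank ℝ ↥(stab ψ ⊓ gS S) := finrank_map_of_inj hinj
    have h2 : (stab ψ ⊓ gS S).map (Pj j) ≤ (stab ψ).map (Pj j) :=
      Submodule.map_mono inf_le_left
    have h3 := Submodule.finrank_mono h2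
    omega
  · intro hdim
    classical
    set K : Submodule ℝ (GV n) := stab ψ with hK
    have hKsub : K ≤ gSub n := inf_le_left
    have hKbr : ∀ x ∈ K, ∀ y ∈ K, gBracket x y ∈ K := fun x hx y hy => stab_bracket hx hy
    set N : Submodule ℝ (GV n) := K ⊓ LinearMap.ker (Pj j) with hN
    set Φ : GV n →ₗ[ℝ] (N →ₗ[ℝ] ℝ) := ((bilGV n).domRestrict N).flip with hΦ
    set O : Submodule ℝ (GV n) := LinearMap.ker Φ with hO
    have hOmem : ∀ v : GV n, v ∈ O ↔ ∀ m ∈ N, bilGV n m v = 0 := by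
      intro v
      constructor
      · intro hv m hm
        exact DFunLike.congr_fun (LinearMap.mem_ker.mp hv) ⟨m, hm⟩
      · intro h
        rw [hO, LinearMap.mem_ker]
        ext m
        exact h m.1 m.2
    set L : Submodule ℝ (GV n) := K ⊓ O with hLdef
    -- dimension count : 2 ≤ finrank L
    have d1 := Submodule.finrank_sup_add_finrank_inf_eq K O
    have d2 : Module.finrank ℝ ↥(K ⊔ O) ≤ Module.finrank ℝ (GV n) := Submodule.finrank_le _
    have d3 : Module.finrank ℝ ↥(LinearMap.range Φ) + Module.finrank ℝ ↥O
        = Module.finrank ℝ (GV n) := LinearMap.finrank_range_add_finrank_ker Φ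
    have d4 : Module.finrank ℝ ↥(LinearMap.range Φ)
        ≤ Module.finrank ℝ ↥(K ⊓ LinearMap.ker (Pj j)) := by
      have h := Submodule.finrank_le (LinearMap.range Φ)
      rw [Module.finrank_linearMap, Module.finrank_self, mul_one] at h
      calc _ ≤ Module.finrank ℝ ↥N := h
        _ = _ := by rw [hN]
    have d5 : Module.finrank ℝ ↥K
        = Module.finrank ℝ ↥(K.map (Pj j))
          + Module.finrank ℝ ↥(K ⊓ LinearMap.ker (Pj j)) := by
      have h := LinearMap.finrank_range_add_finrank_ker ((Pj j).domRestrict K)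
      rw [LinearMap.range_domRestrict] at h
      have hker := finrank_ker_domRestrict K (Pj j)
      omega
    rw [← hLdef] at d1
    have dL : 2 ≤ Module.finrank ℝ ↥L := by omega
    -- injectivity of Pj j on L
    have hinjL : ∀ l ∈ L, l.2 j = 0 → l = 0 := by
      intro l hl h0
      obtain ⟨hlK, hlO⟩ := Submodule.mem_inf.mp hl
      have hlN : l ∈ N := Submodule.mem_inf.mpr ⟨hlK, LinearMap.mem_ker.mpr h0⟩
      exact bilGV_self_eq_zero ((hOmem l).mp hlO l hlN)
    -- L is an ideal of K
    have hLbr : ∀ x ∈ K, ∀ l ∈ L, gBracket x l ∈ L := by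
      intro x hx l hl
      obtain ⟨hlK, hlO⟩ := Submodule.mem_inf.mp hl
      refine Submodule.mem_inf.mpr ⟨hKbr x hx l hlK, (hOmem _).mpr ?_⟩
      intro m hm
      obtain ⟨hmK, hmker⟩ := Submodule.mem_inf.mp hm
      have hxm : gBracket x m ∈ N := by
        refine Submodule.mem_inf.mpr ⟨hKbr x hx m hmK, LinearMap.mem_ker.mpr ?_⟩
        show ⁅x.2 j, m.2 j⁆ = 0
        rw [show m.2 j = 0 from LinearMap.mem_ker.mp hmker]; show _ * _ - _ * _ = (0 : Matrix (Fin 2) (Fin 2) ℂ); simp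
      have hskx : ∀ k, (x.2 k)ᴴ = -(x.2 k) :=
        fun k => (mem_su2.mp (mem_gSub.mp (hKsub hx) k)).1
      have hskm : ∀ k, (m.2 k)ᴴ = -(m.2 k) :=
        fun k => (mem_su2.mp (mem_gSub.mp (hKsub hmK) k)).1
      calc bilGV n m (gBracket x l) = bilGV n (gBracket x l) m := bilGV_symm _ _
        _ = - bilGV n l (gBracket x m) := bilGV_inv x l m hskx hskm
        _ = - bilGV n (gBracket x m) l := by rw [bilGV_symm]
        _ = 0 := by rw [(hOmem l).mp hlO _ hxm, neg_zero]
    have hLK : L ≤ K := inf_le_left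
    -- W = image of L at qubit j is all of su2
    set W : Submodule ℝ (Matrix (Fin 2) (Fin 2) ℂ) := L.map (Pj j) with hWdef
    have hWle : W ≤ su2 := by
      rintro _ ⟨l, hl, rfl⟩
      exact mem_gSub.mp (hKsub (hLK hl)) j
    have hWbr : ∀ p ∈ W, ∀ q ∈ W, ⁅p, q⁆ ∈ W := by
      rintro _ ⟨l, hl, rfl⟩ _ ⟨l', hl', rfl⟩
      exact ⟨gBracket l l', hLbr l (hLK hl) l' hl', rfl⟩
    have hWrankL : Module.finrank ℝ ↥W = Module.finrank ℝ ↥L := finrank_map_of_inj hinjL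
    have hW : W = su2 := su2_span hWle hWbr (by omega)
    have hLrank : Module.finrank ℝ ↥L = 3 := by
      rw [← hWrankL, hW, finrank_su2]
    -- the support of L
    set S : Set (Fin n) := {k | ∃ l ∈ L, l.2 k ≠ 0} with hSdef
    have hjS : j ∈ S := by
      have : mk3 1 0 0 ∈ W := by rw [hW]; exact mk3_mem 1 0 0
      obtain ⟨l, hl, hle⟩ := this
      refine ⟨l, hl, ?_⟩
      rw [show Pj j l = l.2 j from rfl] at hle
      rw [hle]
      intro h0
      exact one_ne_zero (mk3_eq_zero h0).1
    -- injectivity of Pj k on L for every k in S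
    have hinjK : ∀ k, k ∈ S → ∀ l ∈ L, l.2 k = 0 → l = 0 := by
      intro k hk
      by_contra hcon
      push_neg at hcon
      obtain ⟨l0, hl0L, hl0k, hl0ne⟩ := hcon
      set M : Submodule ℝ (GV n) := L ⊓ LinearMap.ker (Pj k) with hM
      set I' : Submodule ℝ (Matrix (Fin 2) (Fin 2) ℂ) := M.map (Pj j) with hI'
      have hstab : ∀ Z ∈ su2, ∀ w ∈ I', ⁅Z, w⁆ ∈ I' := by
        intro Z hZ w hw
        obtain ⟨m, hmM, rfl⟩ := hw
        rw [← hW] at hZ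
        obtain ⟨l, hlL, rfl⟩ := hZ
        refine ⟨gBracket l m, ?_, rfl⟩
        obtain ⟨hm1, hm2⟩ := Submodule.mem_inf.mp hmM
        refine Submodule.mem_inf.mpr ⟨hLbr l (hLK hlL) m hm1, LinearMap.mem_ker.mpr ?_⟩
        show ⁅l.2 k, m.2 k⁆ = 0
        rw [show m.2 k = 0 from LinearMap.mem_ker.mp hm2]; show _ * _ - _ * _ = (0 : Matrix (Fin 2) (Fin 2) ℂ); simp
      have hm0 : Pj j l0 ∈ I' :=
        ⟨l0, Submodule.mem_inf.mpr ⟨hl0L, LinearMap.mem_ker.mpr hl0k⟩, rfl⟩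
      have hm0su : Pj j l0 ∈ su2 := mem_gSub.mp (hKsub (hLK hl0L)) j
      have hm0ne : Pj j l0 ≠ 0 := fun h0 => hl0ne (hinjL l0 hl0L h0)
      have hsu : su2 ≤ I' := su2_simple hstab hm0su hm0 hm0ne
      obtain ⟨l1, hl1L, hl1k⟩ := hk
      have hl1su : Pj j l1 ∈ su2 := mem_gSub.mp (hKsub (hLK hl1L)) j
      obtain ⟨m1, hm1M, hm1e⟩ := hsu hl1su
      have heq : l1 = m1 := by
        have h0 : l1 - m1 = 0 := by
          apply hinjL (l1 - m1) (Submodule.sub_mem L hl1L (Submodule.mem_inf.mp hm1M).1)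
          show l1.2 j - m1.2 j = 0
          rw [show m1.2 j = l1.2 j from hm1e, sub_self]
        exact sub_eq_zero.mp h0
      exact hl1k (heq ▸ LinearMap.mem_ker.mp (Submodule.mem_inf.mp hm1M).2)
    -- full projection at every k in S
    have hfull : ∀ k, k ∈ S → L.map (Pj k) = su2 := by
      intro k hk
      have hle : L.map (Pj k) ≤ su2 := by
        rintro _ ⟨l, hl, rfl⟩
        exact mem_gSub.mp (hKsub (hLK hl)) k
      refine Submodule.eq_of_le_of_finrank_le hle ?_
      rw [finrank_su2, finrank_map_of_inj (hinjK k hk), hLrank]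
    -- all elements of L have zero u(1) part
    have hfst : ∀ l ∈ L, l.1 = 0 := by
      intro l hl
      have he1 : mk3 1 0 0 ∈ W := by rw [hW]; exact mk3_mem 1 0 0
      have he2 : mk3 0 1 0 ∈ W := by rw [hW]; exact mk3_mem 0 1 0
      have he3 : mk3 0 0 1 ∈ W := by rw [hW]; exact mk3_mem 0 0 1
      obtain ⟨x1, hx1L, hx1e⟩ := he1
      obtain ⟨x2, hx2L, hx2e⟩ := he2
      obtain ⟨x3, hx3L, hx3e⟩ := he3
      have hlsu : l.2 j ∈ su2 := mem_gSub.mp (hKsub (hLK hl)) j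
      obtain ⟨a, b, c, hlj⟩ : ∃ a b c, l.2 j = mk3 a b c := ⟨_, _, _, su2_repr hlsu⟩
      set z : GV n := (a/2) • gBracket x2 x3 +
        ((b/2) • gBracket x3 x1 + (c/2) • gBracket x1 x2) with hz
      have hzL : z ∈ L := by
        refine Submodule.add_mem L (Submodule.smul_mem L _ (hLbr x2 (hLK hx2L) x3 hx3L))
          (Submodule.add_mem L (Submodule.smul_mem L _ (hLbr x3 (hLK hx3L) x1 hx1L))
            (Submodule.smul_mem L _ (hLbr x1 (hLK hx1L) x2 hx2L)))
      have hzfst : z.1 = 0 := by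
        simp [hz, gBracket]
      have hzj : z.2 j = mk3 a b c := by
        show (a/2) • ⁅x2.2 j, x3.2 j⁆ +
          ((b/2) • ⁅x3.2 j, x1.2 j⁆ + (c/2) • ⁅x1.2 j, x2.2 j⁆) = mk3 a b c
        rw [show x1.2 j = mk3 1 0 0 from hx1e, show x2.2 j = mk3 0 1 0 from hx2e,
          show x3.2 j = mk3 0 0 1 from hx3e, mk3_bracket, mk3_bracket, mk3_bracket,
          mk3_smul, mk3_smul, mk3_smul, mk3_add, mk3_add]
        exact mk3_congr (by ring) (by ring) (by ring)
      have : l = z := by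
        have h0 : l - z = 0 := by
          apply hinjL (l - z) (Submodule.sub_mem L hl hzL)
          show l.2 j - z.2 j = 0
          rw [hlj, hzj, sub_self]
        exact sub_eq_zero.mp h0
      rw [this, hzfst]
    -- L sits inside stab ⊓ gS S
    have hLgS : L ≤ stab ψ ⊓ gS S := by
      intro l hl
      refine Submodule.mem_inf.mpr ⟨hLK hl, mem_gS.mpr ⟨hfst l hl, ?_, ?_⟩⟩
      · exact fun k _ => mem_gSub.mp (hKsub (hLK hl)) k
      · intro k hk
        by_contra hne
        exact hk ⟨l, hl, hne⟩
    refine ⟨S, ⟨?_, ?_⟩, hjS⟩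
    · have := Submodule.finrank_mono hLgS
      omega
    · intro S' hS'
      have hbot : stab ψ ⊓ gS S' = ⊥ := by
        rw [Submodule.eq_bot_iff]
        intro x hx
        obtain ⟨hxK, hxS'⟩ := Submodule.mem_inf.mp hx
        rw [mem_gS] at hxS'
        obtain ⟨hx1, hx2su, hx2z⟩ := hxS'
        obtain ⟨k0, hk0S, hk0S'⟩ := Set.exists_of_ssubset hS'
        have hbr0 : ∀ l ∈ L, gBracket x l = 0 := by
          intro l hl
          apply hinjK k0 hk0S _ (hLbr x hxK l hl)
          show ⁅x.2 k0, l.2 k0⁆ = 0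
          rw [hx2z k0 hk0S']; show _ * _ - _ * _ = (0 : Matrix (Fin 2) (Fin 2) ℂ); simp
        have hcomp : ∀ m, x.2 m = 0 := by
          intro m
          by_cases hmS' : m ∈ S'
          · have hmS : m ∈ S := hS'.subset hmS'
            apply su2_centralizer (hx2su m hmS')
            intro Y hY
            rw [← hfull m hmS] at hY
            obtain ⟨l, hlL, rfl⟩ := hY
            calc ⁅x.2 m, l.2 m⁆ = (gBracket x l).2 m := rfl
              _ = 0 := by rw [hbr0 l hlL]; rfl
          · exact hx2z m hmS'
        have hx2 : x.2 = 0 := funext hcomp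
        exact Prod.ext hx1 hx2
      rw [hbot]
      exact finrank_bot ℝ (GV n)
/-- Qubit `j` belongs to some `su(2)` block for `ψ` if and only if the
projection of `K_ψ` to the `j`-th `su(2)` summand has dimension `> 1`. -/
theorem stmt3 {n : ℕ} (hn : 1 ≤ n) (ψ : QState n) (hψ : ψ ≠ 0) (j : Fin n) :
    (∃ S : Set (Fin n), Su2Block ψ S ∧ j ∈ S) ↔
      1 < Module.finrank ℝ ↥((stab ψ).map (Pj j)) := by
  exact stmt3' hn ψ hψ j
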